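/- For every nondegenerate gyrotriangle A1A2A3 in 𝔹 with gyroangles α1, α2, α3, one has the identity cos α3 + cos α1 · cos α2 = γ12 · sin α1 · sin α2. -/

import Mathlib

open RealInnerProductSpace

/-- Lorentz gamma factor of a vector `v` in the `s`-ball of `ℝⁿ`. -/
noncomputable def egamma {n : ℕ} (s : ℝ) (v : EuclideanSpace ℝ (Fin n)) : ℝ :=
  1 / Real.sqrt (1 - ‖v‖ ^ 2 / s ^ 2)

/-- Einstein addition on the `s`-ball of `ℝⁿ`. -/
noncomputable def eadd {n : ℕ} (s : ℝ) (u v : EuclideanSpace ℝ (Fin n)) :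
    EuclideanSpace ℝ (Fin n) :=
  (1 / (1 + ⟪u, v⟫ / s ^ 2)) •
    (u + (1 / egamma s u) • v + (egamma s u / (s ^ 2 * (1 + egamma s u))) • ⟪u, v⟫ • u)

/-- Gyroangle at vertex `X` between points `Y` and `Z`. -/
noncomputable def gyroangle {n : ℕ} (s : ℝ) (X Y Z : EuclideanSpace ℝ (Fin n)) : ℝ :=
  Real.arccos ⟪‖eadd s (-X) Y‖⁻¹ • eadd s (-X) Y, ‖eadd s (-X) Z‖⁻¹ • eadd s (-X) Z⟫

/-- Gamma factor of a real gyrodistance `d`. -/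
noncomputable def gammaR (s d : ℝ) : ℝ := 1 / Real.sqrt (1 - d ^ 2 / s ^ 2)

/-- gamma factor of the pair (X,Y): equals `egamma s (eadd s (-X) Y)`. -/
noncomputable def gfac {n : ℕ} (s : ℝ) (X Y : EuclideanSpace ℝ (Fin n)) : ℝ :=
  egamma s X * egamma s Y * (1 - ⟪X, Y⟫ / s ^ 2)

variable {n : ℕ}

lemma scalar_key (s r x a b c : ℝ) (hs : s ≠ 0) (h1r : 1 + r ≠ 0)
    (hr2 : r ^ 2 = 1 - x / s ^ 2) (ha : (1 : ℝ) - a / s ^ 2 ≠ 0) (hb : (1 : ℝ) - b / s ^ 2 ≠ 0) :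
    1 / (1 - b / s ^ 2) *
      ((b / (s ^ 2 * (1 + r)) - 1) *
          (1 / (1 - a / s ^ 2) * ((a / (s ^ 2 * (1 + r)) - 1) * x + r * a)) +
        r * (1 / (1 - a / s ^ 2) * ((a / (s ^ 2 * (1 + r)) - 1) * b + r * c))) =
    (x - a - b + c + (a * b - x * c) / s ^ 2) / ((1 - a / s ^ 2) * (1 - b / s ^ 2)) := by
  have ha' : s ^ 2 - a ≠ 0 := by intro h; apply ha; field_simp; linarith
  have hb' : s ^ 2 - b ≠ 0 := by intro h; apply hb; field_simp; linarith
  have hd : s ^ 2 * (1 + r) ≠ 0 := mul_ne_zero (pow_ne_zero 2 hs) h1r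
  have hr2' : r ^ 2 * s ^ 2 = s ^ 2 - x := by rw [hr2]; field_simp
  have hx : x = s ^ 2 - r ^ 2 * s ^ 2 := by linarith
  subst hx
  field_simp
  ring

lemma scalar2 (s x q1 q2 q3 : ℝ) (hs : s ≠ 0) (h1 : (1:ℝ) - q1 / s ^ 2 ≠ 0)
    (h2 : (1:ℝ) - q2 / s ^ 2 ≠ 0) :
    (x - q1 - q2 + q3 + (q1 * q2 - x * q3) / s ^ 2) / ((1 - q1 / s ^ 2) * (1 - q2 / s ^ 2)) =
      s ^ 2 * (1 - (1 - q3 / s ^ 2) * (1 - x / s ^ 2) / ((1 - q1 / s ^ 2) * (1 - q2 / s ^ 2))) := by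
  have h1' : s ^ 2 - q1 ≠ 0 := by intro h; apply h1; field_simp; linarith
  have h2' : s ^ 2 - q2 ≠ 0 := by intro h; apply h2; field_simp; linarith
  field_simp
  ring

lemma scalar3 (s x y q : ℝ) (hs : s ≠ 0) (h1 : (1:ℝ) - x / s ^ 2 ≠ 0)
    (h2 : (1:ℝ) - y / s ^ 2 ≠ 0) (h3 : (1:ℝ) - q / s ^ 2 ≠ 0) :
    (x - q - q + y + (q * q - x * y) / s ^ 2) / ((1 - q / s ^ 2) * (1 - q / s ^ 2)) =
      s ^ 2 * (1 - 1 / ((1 - q / s ^ 2) ^ 2 / ((1 - x / s ^ 2) * (1 - y / s ^ 2)))) := by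
  have h1' : s ^ 2 - x ≠ 0 := by intro h; apply h1; field_simp; linarith
  have h2' : s ^ 2 - y ≠ 0 := by intro h; apply h2; field_simp; linarith
  have h3' : s ^ 2 - q ≠ 0 := by intro h; apply h3; field_simp; linarith
  field_simp
  ring

lemma one_sub_sq_pos {s : ℝ} (hs : 0 < s) {X : EuclideanSpace ℝ (Fin n)} (hX : ‖X‖ < s) :
    0 < 1 - ‖X‖ ^ 2 / s ^ 2 := by
  have h : ‖X‖ ^ 2 < s ^ 2 := by nlinarith [norm_nonneg X]
  have : ‖X‖ ^ 2 / s ^ 2 < 1 := (div_lt_one (by positivity)).2 h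
  linarith

lemma inner_lt {s : ℝ} (hs : 0 < s) {X Y : EuclideanSpace ℝ (Fin n)} (hX : ‖X‖ < s)
    (hY : ‖Y‖ < s) : 0 < 1 - ⟪X, Y⟫ / s ^ 2 := by
  have h := abs_real_inner_le_norm X Y
  have : ⟪X, Y⟫ < s ^ 2 := by
    calc ⟪X, Y⟫ ≤ ‖X‖ * ‖Y‖ := (abs_le.1 h).2
    _ < s ^ 2 := by nlinarith [norm_nonneg X, norm_nonneg Y]
  have h2 : ⟪X, Y⟫ / s ^ 2 < 1 := (div_lt_one (by positivity)).2 this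
  linarith

lemma egamma_pos {s : ℝ} (hs : 0 < s) {X : EuclideanSpace ℝ (Fin n)} (hX : ‖X‖ < s) :
    0 < egamma s X := by
  have := one_sub_sq_pos hs hX
  rw [egamma]
  positivity

lemma egamma_sq {s : ℝ} (hs : 0 < s) {X : EuclideanSpace ℝ (Fin n)} (hX : ‖X‖ < s) :
    (egamma s X) ^ 2 = 1 / (1 - ‖X‖ ^ 2 / s ^ 2) := by
  rw [egamma, div_pow, one_pow, Real.sq_sqrt (one_sub_sq_pos hs hX).le]

lemma eadd_neg_eq {s : ℝ} (hs : 0 < s) {X : EuclideanSpace ℝ (Fin n)} (hX : ‖X‖ < s)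
    (Y : EuclideanSpace ℝ (Fin n)) :
    eadd s (-X) Y = (1 / (1 - ⟪X, Y⟫ / s ^ 2)) •
      ((⟪X, Y⟫ / (s ^ 2 * (1 + Real.sqrt (1 - ‖X‖ ^ 2 / s ^ 2))) - 1) • X
        + Real.sqrt (1 - ‖X‖ ^ 2 / s ^ 2) • Y) := by
  set r := Real.sqrt (1 - ‖X‖ ^ 2 / s ^ 2) with hrdef
  have hpos := one_sub_sq_pos hs hX
  have hr : 0 < r := Real.sqrt_pos.2 hpos
  have hg : egamma s (-X) = 1 / r := by simp [egamma, hrdef]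
  rw [eadd, hg]
  rw [inner_neg_left, real_inner_comm]
  congr 1
  · ring_nf
  · have hrne : r ≠ 0 := ne_of_gt hr
    have h1r : 0 < 1 + r := by linarith
    match_scalars
    · field_simp
      ring
    · field_simp

lemma inner_eadd {s : ℝ} (hs : 0 < s) {X Y Z : EuclideanSpace ℝ (Fin n)} (hX : ‖X‖ < s)
    (hY : ‖Y‖ < s) (hZ : ‖Z‖ < s) :
    ⟪eadd s (-X) Y, eadd s (-X) Z⟫ =
      (‖X‖ ^ 2 - ⟪X, Y⟫ - ⟪X, Z⟫ + ⟪Y, Z⟫ + (⟪X, Y⟫ * ⟪X, Z⟫ - ‖X‖ ^ 2 * ⟪Y, Z⟫) / s ^ 2)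
        / ((1 - ⟪X, Y⟫ / s ^ 2) * (1 - ⟪X, Z⟫ / s ^ 2)) := by
  rw [eadd_neg_eq hs hX Y, eadd_neg_eq hs hX Z]
  set r := Real.sqrt (1 - ‖X‖ ^ 2 / s ^ 2) with hrdef
  have hpos := one_sub_sq_pos hs hX
  have hr : 0 < r := Real.sqrt_pos.2 hpos
  have hr2 : r ^ 2 = 1 - ‖X‖ ^ 2 / s ^ 2 := Real.sq_sqrt hpos.le
  have hy := inner_lt hs hX hY
  have hz := inner_lt hs hX hZ
  have h1r : (1 : ℝ) + r ≠ 0 := by positivity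
  have hsne : s ≠ 0 := ne_of_gt hs
  simp only [inner_smul_left, inner_smul_right, inner_add_left, inner_add_right,
    real_inner_smul_left, real_inner_smul_right, real_inner_self_eq_norm_sq, conj_trivial]
  rw [real_inner_comm Y X, real_inner_comm Z X]
  exact scalar_key s r (‖X‖ ^ 2) ⟪Y, X⟫ ⟪Z, X⟫ ⟪Y, Z⟫ hsne h1r hr2
    (by rw [← real_inner_comm Y X]; exact ne_of_gt hy)
    (by rw [← real_inner_comm Z X]; exact ne_of_gt hz)

lemma gfac_pos {s : ℝ} (hs : 0 < s) {X Y : EuclideanSpace ℝ (Fin n)} (hX : ‖X‖ < s)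
    (hY : ‖Y‖ < s) : 0 < gfac s X Y := by
  have h1 := egamma_pos hs hX
  have h2 := egamma_pos hs hY
  have h3 := inner_lt hs hX hY
  rw [gfac]; positivity

lemma gfac_comm (s : ℝ) (X Y : EuclideanSpace ℝ (Fin n)) : gfac s X Y = gfac s Y X := by
  rw [gfac, gfac, real_inner_comm]; ring

lemma gfac_sq {s : ℝ} (hs : 0 < s) {X Y : EuclideanSpace ℝ (Fin n)} (hX : ‖X‖ < s)
    (hY : ‖Y‖ < s) :
    (gfac s X Y) ^ 2 = (1 - ⟪X, Y⟫ / s ^ 2) ^ 2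
      / ((1 - ‖X‖ ^ 2 / s ^ 2) * (1 - ‖Y‖ ^ 2 / s ^ 2)) := by
  rw [gfac, mul_pow, mul_pow, egamma_sq hs hX, egamma_sq hs hY]
  have h1 := one_sub_sq_pos hs hX
  have h2 := one_sub_sq_pos hs hY
  set q := ⟪X, Y⟫ with hq
  field_simp

lemma gfac_gt_one {s : ℝ} (hs : 0 < s) {X Y : EuclideanSpace ℝ (Fin n)} (hX : ‖X‖ < s)
    (hY : ‖Y‖ < s) (hXY : X ≠ Y) : 1 < gfac s X Y := by
  have h1 := one_sub_sq_pos hs hX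
  have h2 := one_sub_sq_pos hs hY
  have hpos := gfac_pos hs hX hY
  have hsubn : 0 < ‖X - Y‖ := norm_pos_iff.2 (sub_ne_zero.2 hXY)
  have hsub : (0 : ℝ) < ‖X - Y‖ ^ 2 := by positivity
  have hnorm : ‖X - Y‖ ^ 2 = ‖X‖ ^ 2 - 2 * ⟪X, Y⟫ + ‖Y‖ ^ 2 := norm_sub_sq_real X Y
  have hs2 : (0 : ℝ) < s ^ 2 := by positivity
  have e1 : ‖X‖ ^ 2 < s ^ 2 := by nlinarith [norm_nonneg X]
  have e2 : ‖Y‖ ^ 2 < s ^ 2 := by nlinarith [norm_nonneg Y]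
  have key2 : 0 < (s ^ 2 - ⟪X, Y⟫) ^ 2 - (s ^ 2 - ‖X‖ ^ 2) * (s ^ 2 - ‖Y‖ ^ 2) := by
    nlinarith [sq_nonneg (⟪X, Y⟫ - ‖X‖ ^ 2), hsub, hnorm, e1]
  have hsq : 1 < (gfac s X Y) ^ 2 := by
    rw [gfac_sq hs hX hY, lt_div_iff₀ (by positivity)]
    have expand : (1 - ⟪X, Y⟫ / s ^ 2) ^ 2 - (1 - ‖X‖ ^ 2 / s ^ 2) * (1 - ‖Y‖ ^ 2 / s ^ 2)
        = ((s ^ 2 - ⟪X, Y⟫) ^ 2 - (s ^ 2 - ‖X‖ ^ 2) * (s ^ 2 - ‖Y‖ ^ 2)) / s ^ 4 := by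
      field_simp
    have hdivpos : 0 < ((s ^ 2 - ⟪X, Y⟫) ^ 2 - (s ^ 2 - ‖X‖ ^ 2) * (s ^ 2 - ‖Y‖ ^ 2)) / s ^ 4 :=
      div_pos key2 (by positivity)
    nlinarith [expand, hdivpos]
  nlinarith [hsq, hpos]

lemma norm_eadd_sq {s : ℝ} (hs : 0 < s) {X Y : EuclideanSpace ℝ (Fin n)} (hX : ‖X‖ < s)
    (hY : ‖Y‖ < s) :
    ‖eadd s (-X) Y‖ ^ 2 = s ^ 2 * (1 - 1 / (gfac s X Y) ^ 2) := by
  rw [← real_inner_self_eq_norm_sq, inner_eadd hs hX hY hY, real_inner_self_eq_norm_sq,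
    gfac_sq hs hX hY]
  exact scalar3 s (‖X‖ ^ 2) (‖Y‖ ^ 2) ⟪X, Y⟫ (ne_of_gt hs) (ne_of_gt (one_sub_sq_pos hs hX))
    (ne_of_gt (one_sub_sq_pos hs hY)) (ne_of_gt (inner_lt hs hX hY))

lemma egamma_eadd {s : ℝ} (hs : 0 < s) {X Y : EuclideanSpace ℝ (Fin n)} (hX : ‖X‖ < s)
    (hY : ‖Y‖ < s) : egamma s (eadd s (-X) Y) = gfac s X Y := by
  have hG := gfac_pos hs hX hY
  have hGne : gfac s X Y ≠ 0 := ne_of_gt hG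
  rw [egamma, norm_eadd_sq hs hX hY]
  have h : 1 - s ^ 2 * (1 - 1 / (gfac s X Y) ^ 2) / s ^ 2 = (1 / gfac s X Y) ^ 2 := by
    field_simp
    ring
  rw [h, Real.sqrt_sq (by positivity), one_div_one_div]

lemma norm_eadd {s : ℝ} (hs : 0 < s) {X Y : EuclideanSpace ℝ (Fin n)} (hX : ‖X‖ < s)
    (hY : ‖Y‖ < s) (hXY : X ≠ Y) :
    ‖eadd s (-X) Y‖ = s * Real.sqrt ((gfac s X Y) ^ 2 - 1) / gfac s X Y := by
  have hG := gfac_pos hs hX hY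
  have hG1 := gfac_gt_one hs hX hY hXY
  have h := norm_eadd_sq hs hX hY
  have hG1' : (0:ℝ) ≤ (gfac s X Y) ^ 2 - 1 := by nlinarith
  have hrw : s ^ 2 * (1 - 1 / (gfac s X Y) ^ 2)
      = (s * Real.sqrt ((gfac s X Y) ^ 2 - 1) / gfac s X Y) ^ 2 := by
    rw [div_pow, mul_pow, Real.sq_sqrt hG1']
    field_simp
  rw [← Real.sqrt_sq (norm_nonneg (eadd s (-X) Y)), h, hrw,
    Real.sqrt_sq (by positivity)]

lemma inner_eadd_gfac {s : ℝ} (hs : 0 < s) {X Y Z : EuclideanSpace ℝ (Fin n)} (hX : ‖X‖ < s)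
    (hY : ‖Y‖ < s) (hZ : ‖Z‖ < s) :
    ⟪eadd s (-X) Y, eadd s (-X) Z⟫ =
      s ^ 2 * (1 - gfac s Y Z / (gfac s X Y * gfac s X Z)) := by
  rw [inner_eadd hs hX hY hZ]
  have hx := egamma_pos hs hX
  have hy := egamma_pos hs hY
  have hz := egamma_pos hs hZ
  have h1 := one_sub_sq_pos hs hX
  have h1Y := one_sub_sq_pos hs hY
  have h1Z := one_sub_sq_pos hs hZ
  have hixy := inner_lt hs hX hY
  have hixz := inner_lt hs hX hZ
  have hiyz := inner_lt hs hY hZ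
  have hgx2 : (egamma s X) ^ 2 * (1 - ‖X‖ ^ 2 / s ^ 2) = 1 := by
    rw [egamma_sq hs hX, one_div, inv_mul_cancel₀ (ne_of_gt h1)]
  have key : gfac s Y Z / (gfac s X Y * gfac s X Z) =
      (1 - ⟪Y, Z⟫ / s ^ 2) * (1 - ‖X‖ ^ 2 / s ^ 2)
        / ((1 - ⟪X, Y⟫ / s ^ 2) * (1 - ⟪X, Z⟫ / s ^ 2)) := by
    rw [gfac, gfac, gfac, div_eq_div_iff (by positivity) (by positivity)]
    linear_combination (-(egamma s Y * egamma s Z * (1 - ⟪Y, Z⟫ / s ^ 2) * (1 - ⟪X, Y⟫ / s ^ 2)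
      * (1 - ⟪X, Z⟫ / s ^ 2))) * hgx2
  rw [key]
  exact scalar2 s (‖X‖ ^ 2) ⟪X, Y⟫ ⟪X, Z⟫ ⟪Y, Z⟫ (ne_of_gt hs) (ne_of_gt hixy) (ne_of_gt hixz)

lemma cos_gyroangle {s : ℝ} (hs : 0 < s) {X Y Z : EuclideanSpace ℝ (Fin n)} (hX : ‖X‖ < s)
    (hY : ‖Y‖ < s) (hZ : ‖Z‖ < s) (hXY : X ≠ Y) (hXZ : X ≠ Z) :
    Real.cos (gyroangle s X Y Z) =
      (gfac s X Y * gfac s X Z - gfac s Y Z)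
        / (Real.sqrt ((gfac s X Y) ^ 2 - 1) * Real.sqrt ((gfac s X Z) ^ 2 - 1)) := by
  have hG1 := gfac_gt_one hs hX hY hXY
  have hG2 := gfac_gt_one hs hX hZ hXZ
  have hG1p := gfac_pos hs hX hY
  have hG2p := gfac_pos hs hX hZ
  have hn1 : ‖eadd s (-X) Y‖ = s * Real.sqrt ((gfac s X Y) ^ 2 - 1) / gfac s X Y :=
    norm_eadd hs hX hY hXY
  have hn2 : ‖eadd s (-X) Z‖ = s * Real.sqrt ((gfac s X Z) ^ 2 - 1) / gfac s X Z :=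
    norm_eadd hs hX hZ hXZ
  have hp : (0:ℝ) < Real.sqrt ((gfac s X Y) ^ 2 - 1) := Real.sqrt_pos.2 (by nlinarith)
  have hq : (0:ℝ) < Real.sqrt ((gfac s X Z) ^ 2 - 1) := Real.sqrt_pos.2 (by nlinarith)
  have hm1pos : 0 < ‖eadd s (-X) Y‖ := by rw [hn1]; positivity
  have hm2pos : 0 < ‖eadd s (-X) Z‖ := by rw [hn2]; positivity
  have hu1 : ‖‖eadd s (-X) Y‖⁻¹ • eadd s (-X) Y‖ = 1 := by
    rw [norm_smul, norm_inv, norm_norm, inv_mul_cancel₀ (ne_of_gt hm1pos)]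
  have hu2 : ‖‖eadd s (-X) Z‖⁻¹ • eadd s (-X) Z‖ = 1 := by
    rw [norm_smul, norm_inv, norm_norm, inv_mul_cancel₀ (ne_of_gt hm2pos)]
  have habs : |⟪‖eadd s (-X) Y‖⁻¹ • eadd s (-X) Y, ‖eadd s (-X) Z‖⁻¹ • eadd s (-X) Z⟫| ≤ 1 := by
    calc |⟪‖eadd s (-X) Y‖⁻¹ • eadd s (-X) Y, ‖eadd s (-X) Z‖⁻¹ • eadd s (-X) Z⟫|
        ≤ ‖‖eadd s (-X) Y‖⁻¹ • eadd s (-X) Y‖ * ‖‖eadd s (-X) Z‖⁻¹ • eadd s (-X) Z‖ :=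
          abs_real_inner_le_norm _ _
    _ = 1 := by rw [hu1, hu2]; ring
  rw [gyroangle, Real.cos_arccos (abs_le.1 habs).1 (abs_le.1 habs).2,
    real_inner_smul_left, real_inner_smul_right, inner_eadd_gfac hs hX hY hZ, hn1, hn2]
  have hsne : s ≠ 0 := ne_of_gt hs
  have hG3 := gfac_pos hs hY hZ
  field_simp

lemma sin_gyroangle {n : ℕ} (s : ℝ) (X Y Z : EuclideanSpace ℝ (Fin n)) :
    Real.sin (gyroangle s X Y Z) = Real.sqrt (1 - Real.cos (gyroangle s X Y Z) ^ 2) := by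
  have habs : |⟪‖eadd s (-X) Y‖⁻¹ • eadd s (-X) Y, ‖eadd s (-X) Z‖⁻¹ • eadd s (-X) Z⟫| ≤ 1 := by
    calc |⟪‖eadd s (-X) Y‖⁻¹ • eadd s (-X) Y, ‖eadd s (-X) Z‖⁻¹ • eadd s (-X) Z⟫|
        ≤ ‖‖eadd s (-X) Y‖⁻¹ • eadd s (-X) Y‖ * ‖‖eadd s (-X) Z‖⁻¹ • eadd s (-X) Z‖ :=
          abs_real_inner_le_norm _ _
    _ ≤ 1 := by
        have h1 : ‖‖eadd s (-X) Y‖⁻¹ • eadd s (-X) Y‖ ≤ 1 := by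
          rw [norm_smul]
          rcases eq_or_ne (eadd s (-X) Y) 0 with h | h
          · simp [h]
          · rw [norm_inv, norm_norm, inv_mul_cancel₀ (norm_ne_zero_iff.2 h)]
        have h2 : ‖‖eadd s (-X) Z‖⁻¹ • eadd s (-X) Z‖ ≤ 1 := by
          rw [norm_smul]
          rcases eq_or_ne (eadd s (-X) Z) 0 with h | h
          · simp [h]
          · rw [norm_inv, norm_norm, inv_mul_cancel₀ (norm_ne_zero_iff.2 h)]
        have := norm_nonneg (‖eadd s (-X) Y‖⁻¹ • eadd s (-X) Y)
        have := norm_nonneg (‖eadd s (-X) Z‖⁻¹ • eadd s (-X) Z)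
        nlinarith
  rw [gyroangle, Real.sin_arccos, Real.cos_arccos (abs_le.1 habs).1 (abs_le.1 habs).2]

lemma final_algebra (a b c t1 t2 t3 : ℝ) (ha : 1 < a) (hb : 1 < b) (hc : 1 < c)
    (ht1 : t1 = (c * b - a) / (Real.sqrt (c ^ 2 - 1) * Real.sqrt (b ^ 2 - 1)))
    (ht2 : t2 = (c * a - b) / (Real.sqrt (c ^ 2 - 1) * Real.sqrt (a ^ 2 - 1)))
    (ht3 : t3 = (b * a - c) / (Real.sqrt (b ^ 2 - 1) * Real.sqrt (a ^ 2 - 1)))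
    (habs : |t1| ≤ 1) :
    t3 + t1 * t2 = c * (Real.sqrt (1 - t1 ^ 2) * Real.sqrt (1 - t2 ^ 2)) := by
  set sa := Real.sqrt (a ^ 2 - 1) with hsadef
  set sb := Real.sqrt (b ^ 2 - 1) with hsbdef
  set sc := Real.sqrt (c ^ 2 - 1) with hscdef
  have hsa : 0 < sa := Real.sqrt_pos.2 (by nlinarith)
  have hsb : 0 < sb := Real.sqrt_pos.2 (by nlinarith)
  have hsc : 0 < sc := Real.sqrt_pos.2 (by nlinarith)
  have hsa2 : sa ^ 2 = a ^ 2 - 1 := Real.sq_sqrt (by nlinarith)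
  have hsb2 : sb ^ 2 = b ^ 2 - 1 := Real.sq_sqrt (by nlinarith)
  have hsc2 : sc ^ 2 = c ^ 2 - 1 := Real.sq_sqrt (by nlinarith)
  set D := 1 + 2 * a * b * c - a ^ 2 - b ^ 2 - c ^ 2 with hDdef
  have h1t1 : 1 - t1 ^ 2 = D / (sc ^ 2 * sb ^ 2) := by
    rw [ht1, div_pow, mul_pow, hDdef]
    field_simp
    linear_combination (sb ^ 2) * hsc2 + (c ^ 2 - 1) * hsb2
  have h1t2 : 1 - t2 ^ 2 = D / (sc ^ 2 * sa ^ 2) := by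
    rw [ht2, div_pow, mul_pow, hDdef]
    field_simp
    linear_combination (sa ^ 2) * hsc2 + (c ^ 2 - 1) * hsa2
  have hD : 0 ≤ D := by
    have h := abs_le.1 habs
    have h0 : 0 ≤ 1 - t1 ^ 2 := by nlinarith
    rw [h1t1] at h0
    rcases div_nonneg_iff.1 h0 with ⟨h1, _⟩ | ⟨_, h2⟩
    · exact h1
    · nlinarith [pow_pos hsc 2, pow_pos hsb 2]
  have hrt1 : Real.sqrt (1 - t1 ^ 2) = Real.sqrt D / (sc * sb) := by
    rw [h1t1, Real.sqrt_div hD, Real.sqrt_mul (sq_nonneg sc), Real.sqrt_sq hsc.le,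
      Real.sqrt_sq hsb.le]
  have hrt2 : Real.sqrt (1 - t2 ^ 2) = Real.sqrt D / (sc * sa) := by
    rw [h1t2, Real.sqrt_div hD, Real.sqrt_mul (sq_nonneg sc), Real.sqrt_sq hsc.le,
      Real.sqrt_sq hsa.le]
  rw [hrt1, hrt2, ht1, ht2, ht3]
  have hDD : Real.sqrt D ^ 2 = D := Real.sq_sqrt hD
  field_simp
  linear_combination (b * a - c) * hsc2 - c * hDD - c * hDdef

/-- **Gyrotriangle identity** `cos α3 + cos α1 · cos α2 = γ12 · sin α1 · sin α2`. -/
theorem gyrotriangle_cos_identity {n : ℕ} (hn : 2 ≤ n) (s : ℝ) (hs : 0 < s)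
    (A1 A2 A3 : EuclideanSpace ℝ (Fin n))
    (hA1 : ‖A1‖ < s) (hA2 : ‖A2‖ < s) (hA3 : ‖A3‖ < s)
    (h12 : A1 ≠ A2) (h13 : A1 ≠ A3) (h23 : A2 ≠ A3)
    (hncol : ¬ Collinear ℝ ({A1, A2, A3} : Set (EuclideanSpace ℝ (Fin n))))
    (γ12 α1 α2 α3 : ℝ)
    (hγ12 : γ12 = egamma s (eadd s (-A1) A2))
    (hα1 : α1 = gyroangle s A1 A2 A3)
    (hα2 : α2 = gyroangle s A2 A1 A3)
    (hα3 : α3 = gyroangle s A3 A1 A2) :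
    Real.cos α3 + Real.cos α1 * Real.cos α2 = γ12 * Real.sin α1 * Real.sin α2 := by
  have hγ : γ12 = gfac s A1 A2 := by rw [hγ12, egamma_eadd hs hA1 hA2]
  have hc1 : Real.cos α1 = (gfac s A1 A2 * gfac s A1 A3 - gfac s A2 A3)
      / (Real.sqrt ((gfac s A1 A2) ^ 2 - 1) * Real.sqrt ((gfac s A1 A3) ^ 2 - 1)) := by
    rw [hα1]; exact cos_gyroangle hs hA1 hA2 hA3 h12 h13
  have hc2 : Real.cos α2 = (gfac s A1 A2 * gfac s A2 A3 - gfac s A1 A3)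
      / (Real.sqrt ((gfac s A1 A2) ^ 2 - 1) * Real.sqrt ((gfac s A2 A3) ^ 2 - 1)) := by
    rw [hα2, cos_gyroangle hs hA2 hA1 hA3 (Ne.symm h12) h23, gfac_comm s A2 A1,
      gfac_comm s A2 A3]
  have hc3 : Real.cos α3 = (gfac s A1 A3 * gfac s A2 A3 - gfac s A1 A2)
      / (Real.sqrt ((gfac s A1 A3) ^ 2 - 1) * Real.sqrt ((gfac s A2 A3) ^ 2 - 1)) := by
    rw [hα3, cos_gyroangle hs hA3 hA1 hA2 (Ne.symm h13) (Ne.symm h23), gfac_comm s A3 A1,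
      gfac_comm s A3 A2]
  have hs1 : Real.sin α1 = Real.sqrt (1 - Real.cos α1 ^ 2) := by
    rw [hα1]; exact sin_gyroangle s A1 A2 A3
  have hs2 : Real.sin α2 = Real.sqrt (1 - Real.cos α2 ^ 2) := by
    rw [hα2]; exact sin_gyroangle s A2 A1 A3
  have habs1 : |Real.cos α1| ≤ 1 := Real.abs_cos_le_one α1
  have key := final_algebra (gfac s A2 A3) (gfac s A1 A3) (gfac s A1 A2)
    (Real.cos α1) (Real.cos α2) (Real.cos α3)
    (gfac_gt_one hs hA2 hA3 h23) (gfac_gt_one hs hA1 hA3 h13) (gfac_gt_one hs hA1 hA2 h12)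
    hc1 hc2 hc3 habs1
  rw [hs1, hs2, hγ, mul_assoc]
  exact key
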